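/- Let G be a (P_5, \overline{P_3+P_2})-free graph containing an induced 5-cycle Q = v_1v_2v_3v_4v_5, and for each vertex u ∉ V(Q), consider N(u) ∩ V(Q). Then there is no vertex u ∉ V(Q) whose neighbourhood on Q is exactly {v_i, v_{i+1}} for some i (two consecutive cycle vertices). -/

import Mathlib

open SimpleGraph

/-- A graph is `k`-vertex-critical if its chromatic number is `k` and deleting
any vertex decreases the chromatic number below `k`. -/
def IsKVertexCritical {V : Type} (G : SimpleGraph V) (k : ℕ) : Prop :=
  G.chromaticNumber = k ∧ ∀ v : V, (G.induce {v}ᶜ).chromaticNumber < k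

/-- `G` contains an induced subgraph isomorphic to `H`. -/
def HasInducedCopy {V W : Type} (G : SimpleGraph V) (H : SimpleGraph W) : Prop :=
  ∃ s : Set V, Nonempty (H ≃g G.induce s)

/-- The path on 5 vertices. -/
def P5 : SimpleGraph (Fin 5) := SimpleGraph.pathGraph 5

/-- The disjoint union of a path on 3 vertices (0-1-2) and an edge (3-4). -/
def P3P2 : SimpleGraph (Fin 5) :=
  SimpleGraph.fromRel (fun a b => (a = 0 ∧ b = 1) ∨ (a = 1 ∧ b = 2) ∨ (a = 3 ∧ b = 4))

/-- The complement of `P3 + P2`. -/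
def coP3P2 : SimpleGraph (Fin 5) := P3P2ᶜ

/-- The 3-vertex graph with exactly one edge (the disjoint union `P2 + P1`). -/
def P2P1 : SimpleGraph (Fin 3) := SimpleGraph.fromRel (fun a b => a = 0 ∧ b = 1)

/-- In a `(P5, co(P3+P2))`-free graph with an induced 5-cycle, no outside vertex has
exactly two consecutive neighbours on the cycle. -/
theorem stmt_8 {V : Type} [Fintype V] (G : SimpleGraph V)
    (hP5 : ¬ HasInducedCopy G P5) (hco : ¬ HasInducedCopy G coP3P2)
    (v : Fin 5 → V) (hv : Function.Injective v)
    (hC5 : ∀ i j : Fin 5, G.Adj (v i) (v j) ↔ (j = i + 1 ∨ i = j + 1)) :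
    ¬ ∃ u : V, (∀ i, u ≠ v i) ∧
      ∃ i : Fin 5, ∀ j : Fin 5, G.Adj u (v j) ↔ (j = i ∨ j = i + 1) := by
  rintro ⟨u, hu, i, hadj⟩
  apply hP5
  -- the path u - v(i+1) - v(i+2) - v(i+3) - v(i+4) is an induced P5
  set w : Fin 5 → V := ![u, v (i+1), v (i+2), v (i+3), v (i+4)] with hw
  have hvv : ∀ a b : Fin 5, G.Adj (v (i+a)) (v (i+b)) ↔ (b = a+1 ∨ a = b+1) := by
    intro a b
    rw [hC5]
    constructor
    · rintro (h | h)
      · left; rw [add_assoc] at h; exact add_left_cancel h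
      · right; rw [add_assoc] at h; exact add_left_cancel h
    · rintro (h | h)
      · left; rw [h, add_assoc]
      · right; rw [h, add_assoc]
  have huv : ∀ a : Fin 5, G.Adj u (v (i+a)) ↔ (a = 0 ∨ a = 1) := by
    intro a
    rw [hadj]
    constructor
    · rintro (h | h)
      · left; nth_rewrite 2 [← add_zero i] at h; exact add_left_cancel h
      · right; exact add_left_cancel h
    · rintro (h | h)
      · left; rw [h, add_zero]
      · right; rw [h]
  have hwinj : Function.Injective w := by
    intro a b hab
    fin_cases a <;> fin_cases b <;> simp_all [hw] <;>
      first
        | rfl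
        | (exact absurd hab (hu _))
        | (exact absurd hab.symm (hu _))
        | (exact absurd (add_left_cancel (hv hab)) (by decide))
  have hvu : ∀ a : Fin 5, G.Adj (v (i+a)) u ↔ (a = 0 ∨ a = 1) := by
    intro a; rw [G.adj_comm]; exact huv a
  refine ⟨Set.range w, ⟨⟨Equiv.ofInjective w hwinj, ?_⟩⟩⟩
  intro a b
  simp only [Equiv.ofInjective_apply, comap_adj, Function.Embedding.coe_subtype]
  fin_cases a <;> fin_cases b <;>
    simp [hw, hvv, huv, hvu, P5, pathGraph, ← Fin.coe_covBy_iff,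
      Nat.covBy_iff_add_one_eq] <;> decide
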